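/- Let q : X → Y be a simplicial fibration of simplicial sets with a cleavage C that is flat over a subset S ⊆ X_0. If w ∈ C_n satisfies: the initial vertex s_0(w) lies in S, the initial faces s_k(w) lie in C_k for all 0 < k < n, and d_i(w) ∈ C_{n-1} for all i ≠ i_0 where 0 < i_0 < n, then also d_{i_0}(w) ∈ C_{n-1}. -/

import Mathlib

open CategoryTheory Simplicial SSet Opposite

/-- Restriction of a simplex (as a map from the standard simplex) along `α : [k] → [n]`. -/
def restr {X : SSet} {k n : ℕ} (α : SimplexCategory.mk k ⟶ SimplexCategory.mk n)
    (x : Δ[n] ⟶ X) : Δ[k] ⟶ X :=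
  SSet.stdSimplex.map α ≫ x

/-- The initial inclusion `σ_k : [k] → [n]`. -/
def initialIncl (k n : ℕ) (h : k ≤ n) : SimplexCategory.mk k ⟶ SimplexCategory.mk n :=
  SimplexCategory.mkHom
    ⟨fun i => ⟨(i : ℕ), by have := i.isLt; omega⟩,
     fun a b hab => by simp only [Fin.le_def] at hab ⊢; omega⟩

/-- `q : X ⟶ Y` is a simplicial fibration: every relative horn-lifting problem has a solution. -/
def IsFibration {X Y : SSet} (q : X ⟶ Y) : Prop :=
  ∀ (n : ℕ) (i : Fin (n + 2)) (h : (Λ[n + 1, i] : SSet) ⟶ X) (y : Δ[n + 1] ⟶ Y),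
    h ≫ q = (Λ[n + 1, i]).ι ≫ y →
      ∃ x : Δ[n + 1] ⟶ X, (Λ[n + 1, i]).ι ≫ x = h ∧ x ≫ q = y

/-- `C` is a cleavage for `q`: every relative `(n,k)`-horn with `k < n` has a unique filling
in `C`. -/
def IsCleavage {X Y : SSet} (q : X ⟶ Y) (C : ∀ n, Set (Δ[n] ⟶ X)) : Prop :=
  ∀ (n : ℕ) (i : Fin (n + 2)), (i : ℕ) < n + 1 →
    ∀ (h : (Λ[n + 1, i] : SSet) ⟶ X) (y : Δ[n + 1] ⟶ Y),
      h ≫ q = (Λ[n + 1, i]).ι ≫ y →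
        ∃! x : Δ[n + 1] ⟶ X, x ∈ C (n + 1) ∧ (Λ[n + 1, i]).ι ≫ x = h ∧ x ≫ q = y

/-- `C` is flat over `S ⊆ X_0`. -/
def FlatOver {X Y : SSet} (q : X ⟶ Y) (C : ∀ n, Set (Δ[n] ⟶ X)) (S : Set (Δ[0] ⟶ X)) : Prop :=
  ∀ (n : ℕ) (w : Δ[n + 1] ⟶ X), w ∈ C (n + 1) →
    restr (initialIncl 0 (n + 1) (by omega)) w ∈ S →
    (∀ (k : ℕ) (hk : k + 1 ≤ n + 1), restr (initialIncl (k + 1) (n + 1) hk) w ∈ C (k + 1)) →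
    (∀ i : Fin (n + 1), restr (SimplexCategory.δ i.succ) w ∈ C n) →
    restr (SimplexCategory.δ (0 : Fin (n + 2))) w ∈ C n

namespace Stmt6Aux

open SimplexCategory

universe u
variable {X Y : SSet.{u}}

def elt {k : ℕ} (x : Δ[k] ⟶ X) : X.obj (op ⦋k⦌) :=
  x.app (op ⦋k⦌) (stdSimplex.objEquiv.symm (𝟙 ⦋k⦌))

lemma app_eq {k : ℕ} (x : Δ[k] ⟶ X) {mm : SimplexCategoryᵒᵖ} (β : Δ[k].obj mm) :
    x.app mm β = X.map (stdSimplex.objEquiv β).op (elt x) := by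
  have hβ : β = Δ[k].map (stdSimplex.objEquiv β).op (stdSimplex.objEquiv.symm (𝟙 ⦋k⦌)) := by
    rw [stdSimplex.map_apply]
    rw [Equiv.apply_symm_apply, Quiver.Hom.unop_op, Category.comp_id]
    exact (stdSimplex.objEquiv.symm_apply_apply β).symm
  conv_lhs => rw [hβ]
  exact ConcreteCategory.congr_hom (x.naturality (stdSimplex.objEquiv β).op)
    (stdSimplex.objEquiv.symm (𝟙 ⦋k⦌))

lemma sm_app {a b : SimplexCategory} (f : a ⟶ b) (mm : SimplexCategoryᵒᵖ)
    (β : (SSet.stdSimplex.obj a).obj mm) :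
    (SSet.stdSimplex.map f).app mm β =
      stdSimplex.objEquiv.symm (stdSimplex.objEquiv β ≫ f) := rfl

lemma elt_restr {a b : ℕ} (α : ⦋a⦌ ⟶ ⦋b⦌) (x : Δ[b] ⟶ X) :
    elt (restr α x) = X.map α.op (elt x) := by
  show x.app _ ((SSet.stdSimplex.map α).app _ (stdSimplex.objEquiv.symm (𝟙 ⦋a⦌))) = _
  rw [sm_app, app_eq]
  rw [Equiv.apply_symm_apply]
  simp only [Equiv.apply_symm_apply, Category.id_comp]

lemma restr_restr {a b c : ℕ} (α : ⦋a⦌ ⟶ ⦋b⦌) (β : ⦋b⦌ ⟶ ⦋c⦌)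
    (x : Δ[c] ⟶ X) : restr α (restr β x) = restr (α ≫ β) x := by
  simp only [restr]
  rw [← Category.assoc, ← SSet.stdSimplex.map_comp]

lemma restr_q {a b : ℕ} (α : ⦋a⦌ ⟶ ⦋b⦌) (x : Δ[b] ⟶ X) (q : X ⟶ Y) :
    restr α x ≫ q = restr α (x ≫ q) := by
  simp [restr]

/-- The `j`-th face of the horn `Λ[k+1, i]`, as a map from the standard simplex. -/
def faceMap {k : ℕ} (i j : Fin (k+2)) (hj : j ≠ i) : Δ[k] ⟶ (Λ[k+1, i] : SSet) where
  app mm := TypeCat.ofHom fun β => ⟨(SSet.stdSimplex.map (δ j)).app mm β, by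
    rw [mem_horn_iff, Set.ne_univ_iff_exists_notMem]
    refine ⟨j, ?_⟩
    intro hmem
    rcases hmem with ⟨k', hk'⟩ | hmem
    · have : stdSimplex.asOrderHom ((SSet.stdSimplex.map (δ j)).app mm β) k'
          = j.succAbove ((stdSimplex.asOrderHom β) k') := by
        rw [sm_app]
        rfl
      rw [this] at hk'
      exact Fin.succAbove_ne j _ hk'
    · exact hj (by simpa using hmem)⟩
  naturality mm1 mm2 f := by
    ext β
    apply Subtype.ext
    exact ConcreteCategory.congr_hom ((SSet.stdSimplex.map (δ j)).naturality f) β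

lemma faceMap_comp_hornInclusion {k : ℕ} (i j : Fin (k+2)) (hj : j ≠ i) :
    faceMap i j hj ≫ (Λ[k+1, i]).ι = SSet.stdSimplex.map (δ j) := rfl

lemma restr_eq_of_horn_eq {k : ℕ} {i : Fin (k+2)} {x₁ x₂ : Δ[k+1] ⟶ X}
    (h : (Λ[k+1, i]).ι ≫ x₁ = (Λ[k+1, i]).ι ≫ x₂) (j : Fin (k+2)) (hj : j ≠ i) :
    restr (δ j) x₁ = restr (δ j) x₂ := by
  have h2 := congrArg (fun t => faceMap i j hj ≫ t) h
  simp only [← Category.assoc] at h2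
  rw [faceMap_comp_hornInclusion i j hj] at h2
  exact h2

lemma horn_eq_of_restr_eq {k : ℕ} {i : Fin (k+2)} {x₁ x₂ : Δ[k+1] ⟶ X}
    (h : ∀ j : Fin (k+2), j ≠ i → restr (δ j) x₁ = restr (δ j) x₂) :
    (Λ[k+1, i]).ι ≫ x₁ = (Λ[k+1, i]).ι ≫ x₂ := by
  apply horn.hom_ext
  intro j hj
  show x₁.app _ (horn.face i j hj).1 = x₂.app _ (horn.face i j hj).1
  rw [app_eq x₁, app_eq x₂]
  have he : stdSimplex.objEquiv (horn.face i j hj).1 = δ j := rfl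
  rw [he]
  rw [← elt_restr, ← elt_restr, h j hj]


section Patch

variable {m : ℕ}

/-- The degenerate simplex `s_{i0-1} u`. -/
def su (i0F : Fin (m+3)) (u : Δ[m+1] ⟶ X) : Δ[m+2] ⟶ X :=
  restr (σ (Fin.predAbove 0 i0F)) u

lemma su_face (i0F : Fin (m+3)) (hi0 : i0F ≠ 0) (u : Δ[m+1] ⟶ X) :
    restr (δ i0F) (su i0F u) = u := by
  rw [su, restr_restr]
  have h0 : (0 : Fin (m+2)).castSucc < i0F := by
    simpa using Fin.pos_iff_ne_zero.mpr hi0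
  have hid : δ i0F ≫ σ (Fin.predAbove 0 i0F) = 𝟙 ⦋m+1⦌ := by
    rw [Fin.predAbove_of_castSucc_lt _ _ h0]
    exact δ_comp_σ_succ' (Fin.succ_pred i0F _).symm
  rw [hid]
  rw [restr, CategoryTheory.Functor.map_id SSet.stdSimplex, Category.id_comp]

lemma su_eq_w (w : Δ[m+2] ⟶ X) (i0F : Fin (m+3)) (hi0 : i0F ≠ 0) (u : Δ[m+1] ⟶ X)
    (hu : ∀ c : Fin (m+2), c ≠ 0 → restr (δ c) u = restr (δ c) (restr (δ i0F) w))
    {mm : SimplexCategoryᵒᵖ} (β : Δ[m+2].obj mm)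
    (hmiss : ∀ k, stdSimplex.asOrderHom β k ≠ i0F)
    (j : Fin (m+3)) (hj0 : j ≠ 0) (hji : j ≠ i0F) (hjm : ∀ k, stdSimplex.asOrderHom β k ≠ j) :
    (su i0F u).app mm β = w.app mm β := by
  induction mm using Opposite.rec with | op mmu => ?_
  induction mmu using SimplexCategory.rec with | mk k => ?_
  have hspec : factor_δ (stdSimplex.objEquiv β) i0F ≫ δ i0F
      = stdSimplex.objEquiv β := factor_δ_spec _ i0F hmiss
  set g := stdSimplex.objEquiv β with hgdef
  set F := factor_δ g i0F with hFdef
  obtain ⟨c, hc⟩ := Fin.exists_succAbove_eq (x := j) (y := i0F) hji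
  have hc0 : c ≠ 0 := by
    rintro rfl
    apply hj0
    rw [← hc, Fin.succAbove_of_castSucc_lt _ _ (by simpa using Fin.pos_iff_ne_zero.mpr hi0)]
    simp
  have hFc : ∀ k', F.toOrderHom k' ≠ c := by
    intro k' hk'
    apply hjm k'
    have h1 : g.toOrderHom k' = i0F.succAbove (F.toOrderHom k') := by
      conv_lhs => rw [← hspec]
      rfl
    show g.toOrderHom k' = j
    rw [h1, hk', hc]
  have hFspec : factor_δ F c ≫ δ c = F := factor_δ_spec F c hFc
  rw [app_eq (su i0F u) β, app_eq w β]
  calc X.map g.op (elt (su i0F u))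
      = X.map (F ≫ δ i0F).op (elt (su i0F u)) := by rw [hspec]
    _ = X.map F.op (X.map (δ i0F).op (elt (su i0F u))) := by
        rw [op_comp, FunctorToTypes.map_comp_apply]
    _ = X.map F.op (elt (restr (δ i0F) (su i0F u))) := by rw [elt_restr]
    _ = X.map F.op (elt u) := by rw [su_face i0F hi0 u]
    _ = X.map (factor_δ F c ≫ δ c).op (elt u) := by rw [hFspec]
    _ = X.map (factor_δ F c).op (elt (restr (δ c) u)) := by
        rw [op_comp, FunctorToTypes.map_comp_apply, elt_restr]
    _ = X.map (factor_δ F c).op (elt (restr (δ c) (restr (δ i0F) w))) := by rw [hu c hc0]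
    _ = X.map F.op (elt (restr (δ i0F) w)) := by
        rw [elt_restr, ← FunctorToTypes.map_comp_apply, ← op_comp, hFspec]
    _ = X.map F.op (X.map (δ i0F).op (elt w)) := by rw [elt_restr]
    _ = X.map g.op (elt w) := by rw [← hspec, op_comp, FunctorToTypes.map_comp_apply]

lemma fix_of_misses (i0F : Fin (m+3)) {mm : SimplexCategoryᵒᵖ} (β : Δ[m+2].obj mm)
    (hmiss : ∀ k, stdSimplex.asOrderHom β k ≠ i0F) :
    (SSet.stdSimplex.map (σ (Fin.predAbove 0 i0F) ≫ δ i0F)).app mm β = β := by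
  induction mm using Opposite.rec with | op mmu => ?_
  induction mmu using SimplexCategory.rec with | mk k => ?_
  apply stdSimplex.objEquiv.injective
  rw [sm_app, Equiv.apply_symm_apply]
  rw [← Category.assoc]
  exact factor_δ_spec _ i0F hmiss

open Classical in
/-- The horn `Λ[m+2, 0] ⟶ X` obtained from the faces of `w` by replacing the `i0F`-th
face with `u`. -/
noncomputable def patchHorn (w : Δ[m+2] ⟶ X) (i0F : Fin (m+3)) (hi0 : i0F ≠ 0)
    (u : Δ[m+1] ⟶ X)
    (hu : ∀ c : Fin (m+2), c ≠ 0 → restr (δ c) u = restr (δ c) (restr (δ i0F) w)) :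
    (Λ[m+2, (0 : Fin (m+3))] : SSet) ⟶ X where
  app mm := TypeCat.ofHom fun α =>
    if ∀ k, stdSimplex.asOrderHom α.1 k ≠ i0F then (su i0F u).app mm α.1 else w.app mm α.1
  naturality mm1 mm2 f := by
    ext α
    show (if ∀ k, stdSimplex.asOrderHom ((Λ[m+2, (0 : Fin (m+3))] : SSet).map f α).1 k ≠ i0F then
        (su i0F u).app mm2 ((Λ[m+2, (0 : Fin (m+3))] : SSet).map f α).1
      else w.app mm2 ((Λ[m+2, (0 : Fin (m+3))] : SSet).map f α).1)
      = X.map f (if ∀ k, stdSimplex.asOrderHom α.1 k ≠ i0F then (su i0F u).app mm1 α.1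
          else w.app mm1 α.1)
    have hval : ((Λ[m+2, (0 : Fin (m+3))] : SSet).map f α).1 = Δ[m+2].map f α.1 := rfl
    have hβ : ∀ k, stdSimplex.asOrderHom (Δ[m+2].map f α.1) k = stdSimplex.asOrderHom α.1 (f.unop.toOrderHom k) :=
      fun _ => rfl
    by_cases h1 : ∀ k, stdSimplex.asOrderHom α.1 k ≠ i0F
    · have h2 : ∀ k, stdSimplex.asOrderHom ((Λ[m+2, (0 : Fin (m+3))] : SSet).map f α).1 k ≠ i0F := by
        intro k
        rw [hval, hβ k]
        exact h1 _
      rw [if_pos h2, if_pos h1]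
      exact ConcreteCategory.congr_hom ((su i0F u).naturality f) α.1
    · rw [if_neg h1]
      by_cases h2 : ∀ k, stdSimplex.asOrderHom ((Λ[m+2, (0 : Fin (m+3))] : SSet).map f α).1 k ≠ i0F
      · rw [if_pos h2]
        have hw : w.app mm2 ((Λ[m+2, (0 : Fin (m+3))] : SSet).map f α).1 = X.map f (w.app mm1 α.1) :=
          ConcreteCategory.congr_hom (w.naturality f) α.1
        rw [← hw]
        obtain ⟨j, hj⟩ := (Set.ne_univ_iff_exists_notMem _).mp ((mem_horn_iff _ _).mp α.2)
        simp only [Set.mem_union, Set.mem_range, Set.mem_singleton_iff, not_or,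
          not_exists] at hj
        obtain ⟨hjr, hj0⟩ := hj
        have hji : j ≠ i0F := by
          intro hEq
          push_neg at h1
          obtain ⟨k0, hk0⟩ := h1
          exact hjr k0 (hEq ▸ hk0)
        exact su_eq_w w i0F hi0 u hu _ h2 j hj0 hji
          (fun k => by rw [hval, hβ k]; exact hjr _)
      · rw [if_neg h2]
        exact ConcreteCategory.congr_hom (w.naturality f) α.1

variable (w : Δ[m+2] ⟶ X) (i0F : Fin (m+3)) (hi0 : i0F ≠ 0) (u : Δ[m+1] ⟶ X)
  (hu : ∀ c : Fin (m+2), c ≠ 0 → restr (δ c) u = restr (δ c) (restr (δ i0F) w))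

lemma patchHorn_app_pos {mm : SimplexCategoryᵒᵖ} (α : (Λ[m+2, (0 : Fin (m+3))] : SSet).obj mm)
    (h : ∀ k, stdSimplex.asOrderHom α.1 k ≠ i0F) :
    (patchHorn w i0F hi0 u hu).app mm α = (su i0F u).app mm α.1 := by
  show (if ∀ k, stdSimplex.asOrderHom α.1 k ≠ i0F then (su i0F u).app mm α.1 else w.app mm α.1)
      = (su i0F u).app mm α.1
  rw [if_pos h]

lemma patchHorn_app_neg {mm : SimplexCategoryᵒᵖ} (α : (Λ[m+2, (0 : Fin (m+3))] : SSet).obj mm)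
    (h : ¬ ∀ k, stdSimplex.asOrderHom α.1 k ≠ i0F) :
    (patchHorn w i0F hi0 u hu).app mm α = w.app mm α.1 := by
  show (if ∀ k, stdSimplex.asOrderHom α.1 k ≠ i0F then (su i0F u).app mm α.1 else w.app mm α.1)
      = w.app mm α.1
  rw [if_neg h]

lemma patchHorn_face_i0 :
    faceMap (0 : Fin (m+3)) i0F hi0 ≫ patchHorn w i0F hi0 u hu = u := by
  ext mm β
  show (patchHorn w i0F hi0 u hu).app mm ((faceMap (0 : Fin (m+3)) i0F hi0).app mm β) = u.app mm β
  have hcond : ∀ k, stdSimplex.asOrderHom (((faceMap (0 : Fin (m+3)) i0F hi0).app mm β)).1 k ≠ i0F := by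
    intro k
    exact Fin.succAbove_ne i0F _
  rw [patchHorn_app_pos w i0F hi0 u hu _ hcond]
  exact ConcreteCategory.congr_hom (congrFun (congrArg NatTrans.app (su_face i0F hi0 u)) mm) β

lemma patchHorn_face_other (j : Fin (m+3)) (hj0 : j ≠ (0 : Fin (m+3))) (hji : j ≠ i0F) :
    faceMap (0 : Fin (m+3)) j hj0 ≫ patchHorn w i0F hi0 u hu = restr (δ j) w := by
  ext mm β
  show (patchHorn w i0F hi0 u hu).app mm ((faceMap (0 : Fin (m+3)) j hj0).app mm β)
      = (restr (δ j) w).app mm β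
  by_cases hcond : ∀ k, stdSimplex.asOrderHom (((faceMap (0 : Fin (m+3)) j hj0).app mm β)).1 k ≠ i0F
  · rw [patchHorn_app_pos w i0F hi0 u hu _ hcond]
    exact su_eq_w w i0F hi0 u hu _ hcond j hj0 hji (fun k => Fin.succAbove_ne j _)
  · rw [patchHorn_app_neg w i0F hi0 u hu _ hcond]
    rfl

lemma patchHorn_q {Y : SSet.{u}} (q : X ⟶ Y) (huq : u ≫ q = restr (δ i0F) w ≫ q) :
    patchHorn w i0F hi0 u hu ≫ q = (Λ[m+2, (0 : Fin (m+3))]).ι ≫ (w ≫ q) := by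
  ext mm α
  show q.app mm ((patchHorn w i0F hi0 u hu).app mm α) = (w ≫ q).app mm α.1
  by_cases hcond : ∀ k, stdSimplex.asOrderHom α.1 k ≠ i0F
  · rw [patchHorn_app_pos w i0F hi0 u hu _ hcond]
    have hsq : su i0F u ≫ q = restr (σ (Fin.predAbove 0 i0F) ≫ δ i0F) (w ≫ q) := by
      rw [su, restr_q, huq, restr_q, ← restr_restr]
    have : q.app mm ((su i0F u).app mm α.1) = (su i0F u ≫ q).app mm α.1 := rfl
    rw [this, hsq]
    show (w ≫ q).app mm ((SSet.stdSimplex.map (σ (Fin.predAbove 0 i0F) ≫ δ i0F)).app mm α.1)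
        = (w ≫ q).app mm α.1
    rw [fix_of_misses i0F α.1 hcond]
  · rw [patchHorn_app_neg w i0F hi0 u hu _ hcond]
    rfl

end Patch

end Stmt6Aux

namespace Stmt6Aux

open SimplexCategory

universe u
variable {X Y : SSet.{u}}

lemma restr_one {nn : ℕ} (x : Δ[nn] ⟶ X) : restr (𝟙 ⦋nn⦌) x = x := by
  rw [restr, CategoryTheory.Functor.map_id SSet.stdSimplex, Category.id_comp]

lemma initialIncl_eq_id (nn : ℕ) (h : nn ≤ nn) :
    initialIncl nn nn h = 𝟙 ⦋nn⦌ := by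
  apply SimplexCategory.Hom.ext'
  apply OrderHom.ext
  funext i
  exact Fin.ext rfl

lemma initialIncl_factor (k nn : ℕ) (h : k ≤ nn) (h' : k ≤ nn+1) :
    initialIncl k (nn+1) h' = initialIncl k nn h ≫ δ (Fin.last (nn+1)) := by
  apply SimplexCategory.Hom.ext'
  apply OrderHom.ext
  funext i
  have hh : (i : ℕ) < k + 1 := by simpa using i.isLt
  show (⟨(i : ℕ), by omega⟩ : Fin (nn+2))
      = (Fin.last (nn+1)).succAbove ⟨(i : ℕ), by omega⟩
  rw [Fin.succAbove_last]
  exact Fin.ext rfl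

end Stmt6Aux


open Stmt6Aux SimplexCategory in
/-- if the cleavage `C` is flat over `S`, `w ∈ C_n` has initial vertex in `S`,
initial faces in `C`, and all faces but `d_{i_0}` (with `0 < i_0 < n`) in `C`, then also
`d_{i_0} w ∈ C`. -/
theorem stmt6 {X Y : SSet} (q : X ⟶ Y) (C : ∀ n, Set (Δ[n] ⟶ X)) (S : Set (Δ[0] ⟶ X))
    (hq : IsFibration q) (hC : IsCleavage q C) (hflat : FlatOver q C S)
    (n : ℕ) (w : Δ[n + 1] ⟶ X) (hw : w ∈ C (n + 1))
    (h0 : restr (initialIncl 0 (n + 1) (by omega)) w ∈ S)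
    (hsk : ∀ (k : ℕ) (hk0 : 0 < k) (hk : k < n + 1),
      restr (initialIncl k (n + 1) (le_of_lt hk)) w ∈ C k)
    (i0 : ℕ) (hi0 : 0 < i0) (hi0' : i0 < n + 1)
    (hfaces : ∀ i : Fin (n + 2), (i : ℕ) ≠ i0 →
      restr (SimplexCategory.δ i) w ∈ C n) :
    restr (SimplexCategory.δ (⟨i0, by omega⟩ : Fin (n + 2))) w ∈ C n := by
  obtain ⟨m, rfl⟩ : ∃ m, n = m + 1 := ⟨n - 1, by omega⟩
  have hi0F : (⟨i0, by omega⟩ : Fin (m + 3)) ≠ 0 := by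
    simp only [ne_eq, Fin.ext_iff, Fin.val_zero]
    omega
  set i0F : Fin (m + 3) := ⟨i0, by omega⟩ with hi0Fdef
  -- Step 1: the cleavage filler `uu` of the `Λ[m+1,0]`-horn of `d_{i0} w`
  obtain ⟨uu, ⟨huC, huh, huq⟩, -⟩ := hC m (0 : Fin (m + 2)) (by simp)
    ((Λ[m + 1, 0]).ι ≫ restr (δ i0F) w) (restr (δ i0F) w ≫ q) (by simp)
  have hu : ∀ c : Fin (m + 2), c ≠ 0 → restr (δ c) uu = restr (δ c) (restr (δ i0F) w) :=
    fun c hc => restr_eq_of_horn_eq huh c hc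
  -- Step 2: the cleavage filler `z` of the patched horn
  obtain ⟨z, ⟨hzC, hzh, hzq⟩, -⟩ := hC (m + 1) (0 : Fin (m + 3)) (by simp)
    (patchHorn w i0F hi0F uu hu) (w ≫ q) (patchHorn_q w i0F hi0F uu hu q huq)
  have hz_i0 : restr (δ i0F) z = uu := by
    have h1 : faceMap (0 : Fin (m + 3)) i0F hi0F ≫ (Λ[m + 2, 0]).ι ≫ z
        = faceMap (0 : Fin (m + 3)) i0F hi0F ≫ patchHorn w i0F hi0F uu hu := by rw [hzh]
    rw [← CategoryTheory.Category.assoc, faceMap_comp_hornInclusion,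
      patchHorn_face_i0] at h1
    exact h1
  have hz_other : ∀ j : Fin (m + 3), j ≠ 0 → j ≠ i0F → restr (δ j) z = restr (δ j) w := by
    intro j hj0 hji
    have h1 : faceMap (0 : Fin (m + 3)) j hj0 ≫ (Λ[m + 2, 0]).ι ≫ z
        = faceMap (0 : Fin (m + 3)) j hj0 ≫ patchHorn w i0F hi0F uu hu := by rw [hzh]
    rw [← CategoryTheory.Category.assoc, faceMap_comp_hornInclusion,
      patchHorn_face_other w i0F hi0F uu hu j hj0 hji] at h1
    exact h1
  have hlast0 : (Fin.last (m + 2)) ≠ (0 : Fin (m + 3)) := by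
    simp only [ne_eq, Fin.ext_iff, Fin.val_last, Fin.val_zero]
    omega
  have hvi0F : (i0F : ℕ) = i0 := rfl
  have hlasti0 : (Fin.last (m + 2)) ≠ i0F := by
    intro hEq
    have := congrArg Fin.val hEq
    rw [Fin.val_last, hvi0F] at this
    omega
  -- Step 3: flatness gives `d_0 z ∈ C`
  have hz0 : restr (δ (0 : Fin (m + 3))) z ∈ C (m + 1) := by
    apply hflat (m + 1) z hzC
    · rw [initialIncl_factor 0 (m + 1) (by omega) (by omega), ← restr_restr,
        hz_other (Fin.last (m + 2)) hlast0 hlasti0, restr_restr,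
        ← initialIncl_factor 0 (m + 1) (by omega) (by omega)]
      exact h0
    · intro k hk
      rcases Nat.lt_or_ge (k + 1) (m + 2) with hlt | hge
      · rw [initialIncl_factor (k + 1) (m + 1) (by omega) (by omega), ← restr_restr,
          hz_other (Fin.last (m + 2)) hlast0 hlasti0, restr_restr,
          ← initialIncl_factor (k + 1) (m + 1) (by omega) (by omega)]
        exact hsk (k + 1) (by omega) (by omega)
      · obtain rfl : k = m + 1 := by omega
        rw [initialIncl_eq_id (m + 2) (by omega), restr_one]
        exact hzC
    · intro i
      by_cases hii : i.succ = i0F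
      · rw [hii, hz_i0]
        exact huC
      · rw [hz_other i.succ (Fin.succ_ne_zero i) hii]
        exact hfaces i.succ (fun hv => hii (Fin.ext hv))
  -- Step 4: `d_0 z = d_0 w` by uniqueness of fillers of the `Λ[m+1, i0-1]`-horn
  have hd0 : restr (δ (0 : Fin (m + 3))) z = restr (δ (0 : Fin (m + 3))) w := by
    obtain ⟨v, -, huniq⟩ := hC m (⟨i0 - 1, by omega⟩ : Fin (m + 2)) (by simp; omega)
      ((Λ[m + 1, _]).ι ≫ restr (δ (0 : Fin (m + 3))) w)
      (restr (δ (0 : Fin (m + 3))) w ≫ q) (by simp)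
    have h1 : restr (δ (0 : Fin (m + 3))) w = v :=
      huniq _ ⟨hfaces 0 (by omega), rfl, rfl⟩
    have h2 : restr (δ (0 : Fin (m + 3))) z = v := by
      apply huniq
      refine ⟨hz0, ?_, ?_⟩
      · apply horn_eq_of_restr_eq
        intro a ha
        have hcomp : δ a ≫ δ (0 : Fin (m + 3)) = δ (0 : Fin (m + 2)) ≫ δ a.succ := by
          rw [← Fin.castSucc_zero (n := m + 1)]
          exact (δ_comp_δ (Fin.zero_le a)).symm
        rw [restr_restr, restr_restr, hcomp, ← restr_restr, ← restr_restr]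
        rw [hz_other a.succ (Fin.succ_ne_zero a)
          (fun hv => ha (by
            apply Fin.ext
            have h3 := congrArg Fin.val hv
            rw [Fin.val_succ, hvi0F] at h3
            show (a : ℕ) = i0 - 1
            omega))]
      · rw [restr_q, restr_q, hzq]
    rw [h2, h1]
  -- Step 5: `z = w` by uniqueness of fillers of the `Λ[m+2, i0]`-horn, so `d_{i0} w = uu ∈ C`
  have hzw : z = w := by
    obtain ⟨t, -, htu⟩ := hC (m + 1) i0F (by rw [hi0Fdef]; exact hi0')
      ((Λ[m + 2, i0F]).ι ≫ w) (w ≫ q) (by simp)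
    have h1 : w = t := htu _ ⟨hw, rfl, rfl⟩
    have h2 : z = t := by
      apply htu
      refine ⟨hzC, ?_, hzq⟩
      apply horn_eq_of_restr_eq
      intro j hj
      by_cases hj0 : j = 0
      · subst hj0
        exact hd0
      · exact hz_other j hj0 hj
    rw [h2, h1]
  show restr (δ i0F) w ∈ C (m + 1)
  rw [← hzw, hz_i0]
  exact huC
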